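/- Let f be a Laurent polynomial in one complex variable with complex coefficients such that f(z) is real and nonnegative for all z on the unit circle. Then there exists a polynomial p with complex coefficients such that f(z) = |p(z)|^2 for all z on the unit circle. -/

import Mathlib

open Polynomial Complex ComplexConjugate Finset

lemma conj_eval (Q : ℂ[X]) (t : ℝ) :
    (Q.map (starRingEnd ℂ)).eval (t : ℂ) = conj (Q.eval (t : ℂ)) := by
  have h := Polynomial.eval₂_at_apply (p := Q) (starRingEnd ℂ) ((t : ℂ))
  simp only [Complex.conj_ofReal] at h
  rw [Polynomial.eval_map, h]

/-- A complex polynomial taking real values on ℝ comes from a real polynomial. -/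
lemma real_lift (Q : ℂ[X]) (h : ∀ t : ℝ, (Q.eval (t : ℂ)).im = 0) :
    ∃ R : ℝ[X], R.map (algebraMap ℝ ℂ) = Q := by
  have hconj : Q.map (starRingEnd ℂ) = Q := by
    have hroots : ∀ t : ℝ, (Q.map (starRingEnd ℂ) - Q).IsRoot (t : ℂ) := by
      intro t
      have h2 : conj (Q.eval (t : ℂ)) = Q.eval (t : ℂ) :=
        Complex.conj_eq_iff_im.2 (h t)
      simp [Polynomial.IsRoot, conj_eval, h2]
    have h0 : (Q.map (starRingEnd ℂ) - Q) = 0 := by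
      apply Polynomial.eq_zero_of_infinite_isRoot
      apply Set.Infinite.mono (s := Set.range ((↑) : ℝ → ℂ))
      · rintro x ⟨t, rfl⟩; exact hroots t
      · exact Set.infinite_range_of_injective Complex.ofReal_injective
    have := sub_eq_zero.mp h0; exact this
  rw [← Polynomial.mem_lifts]
  rw [Polynomial.lifts_iff_coeff_lifts]
  intro n
  have : conj (Q.coeff n) = Q.coeff n := by
    conv_rhs => rw [← hconj]
    simp [Polynomial.coeff_map]
  refine ⟨(Q.coeff n).re, ?_⟩
  have him : (Q.coeff n).im = 0 := Complex.conj_eq_iff_im.1 this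
  exact (Complex.ext (by simp) (by simp [him])).symm  -- algebraMap ℝ ℂ r = r

lemma sos_aux : ∀ (N : ℕ) (R : ℝ[X]), R.natDegree = N → (∀ t : ℝ, 0 ≤ R.eval t) →
    ∃ A : ℂ[X], 2 * A.natDegree ≤ N ∧
      ∀ t : ℝ, ((R.eval t : ℝ) : ℂ) = A.eval (t : ℂ) * conj (A.eval (t : ℂ)) := by
  intro N
  induction N using Nat.strong_induction_on with
  | _ N ih =>
    intro R hdeg hnn
    rcases Nat.eq_zero_or_pos N with hN | hN
    · subst hN
      obtain ⟨a, rfl⟩ := Polynomial.natDegree_eq_zero.1 hdeg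
      have ha : 0 ≤ a := by simpa using hnn 0
      refine ⟨Polynomial.C (Real.sqrt a : ℂ), by simp, fun t => ?_⟩
      simp [← Complex.ofReal_mul, Real.mul_self_sqrt ha]
    · have hR0 : R ≠ 0 := fun h => by simp [h] at hdeg; omega
      have hdegpos : 0 < (R.map (algebraMap ℝ ℂ)).degree := by
        rw [Polynomial.degree_map_eq_of_injective (algebraMap ℝ ℂ).injective]
        exact Polynomial.natDegree_pos_iff_degree_pos.1 (by omega)
      obtain ⟨α, hα⟩ := Complex.exists_root hdegpos
      by_cases him : α.im = 0
      · -- real root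
        obtain ⟨r, hrα⟩ : ∃ r : ℝ, α = (r : ℂ) := ⟨α.re, by apply Complex.ext <;> simp [him]⟩
        have hroot : R.IsRoot r := by
          have h1 : (R.map (algebraMap ℝ ℂ)).eval ((r : ℝ) : ℂ) = 0 := by rw [← hrα]; exact hα
          rw [Polynomial.eval_map, show ((r:ℝ):ℂ) = algebraMap ℝ ℂ r from rfl,
            Polynomial.eval₂_at_apply] at h1
          simpa using h1
        obtain ⟨S, hS⟩ := (Polynomial.dvd_iff_isRoot.2 hroot)
        have hSeval : ∀ t : ℝ, R.eval t = (t - r) * S.eval t := by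
          intro t; rw [hS]; simp
        have hSr : S.eval r = 0 := by
          have hcont : ContinuousAt (fun t : ℝ => S.eval t) r :=
            (Polynomial.continuous S).continuousAt
          have hge : 0 ≤ S.eval r := by
            refine ge_of_tendsto (hcont.continuousWithinAt (s := Set.Ioi r)) ?_
            filter_upwards [self_mem_nhdsWithin] with t ht
            have h1 := hnn t
            rw [hSeval t] at h1
            have h2 : (0:ℝ) < t - r := sub_pos.2 ht
            nlinarith
          have hle : S.eval r ≤ 0 := by
            refine le_of_tendsto (hcont.continuousWithinAt (s := Set.Iio r)) ?_
            filter_upwards [self_mem_nhdsWithin] with t ht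
            have h1 := hnn t
            rw [hSeval t] at h1
            have h2 : t - r < 0 := sub_neg.2 ht
            nlinarith
          linarith
        obtain ⟨T, hT⟩ := (Polynomial.dvd_iff_isRoot.2 hSr)
        have hRT : R = (X - Polynomial.C r) ^ 2 * T := by rw [hS, hT]; ring
        have hTeval : ∀ t : ℝ, R.eval t = (t - r) ^ 2 * T.eval t := by
          intro t; rw [hRT]; simp
        have hT0 : T ≠ 0 := fun h => hR0 (by rw [hRT, h, mul_zero])
        have hTdeg : T.natDegree = N - 2 ∧ 2 ≤ N := by
          have hx : ((X - Polynomial.C r) ^ 2 : ℝ[X]) ≠ 0 := pow_ne_zero _ (X_sub_C_ne_zero r)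
          have := Polynomial.natDegree_mul hx hT0
          rw [← hRT, hdeg] at this
          simp [Polynomial.natDegree_pow, Polynomial.natDegree_X_sub_C] at this
          omega
        have hTnn : ∀ t : ℝ, 0 ≤ T.eval t := by
          intro t
          by_cases htr : t = r
          · subst htr
            have hcont : ContinuousAt (fun u : ℝ => T.eval u) t :=
              (Polynomial.continuous T).continuousAt
            refine ge_of_tendsto (hcont.continuousWithinAt (s := {t}ᶜ)) ?_
            filter_upwards [self_mem_nhdsWithin] with u hu
            have h1 := hnn u
            rw [hTeval u] at h1
            have h2 : (0:ℝ) < (u - t) ^ 2 := by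
              have : u - t ≠ 0 := sub_ne_zero.2 hu
              positivity
            nlinarith
          · have h1 := hnn t
            rw [hTeval t] at h1
            have h2 : (0:ℝ) < (t - r) ^ 2 := by
              have : t - r ≠ 0 := sub_ne_zero.2 htr
              positivity
            nlinarith
        obtain ⟨A₁, hA₁deg, hA₁⟩ := ih (N - 2) (by omega) T hTdeg.1 hTnn
        refine ⟨(X - Polynomial.C (r : ℂ)) * A₁, ?_, fun t => ?_⟩
        · have := Polynomial.natDegree_mul_le (p := X - Polynomial.C (r:ℂ)) (q := A₁)
          have h3 : (X - Polynomial.C (r:ℂ)).natDegree = 1 := Polynomial.natDegree_X_sub_C (r:ℂ)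
          omega
        · have key := hA₁ t
          simp only [Polynomial.eval_mul, Polynomial.eval_sub, Polynomial.eval_X,
            Polynomial.eval_C, map_mul, map_sub, Complex.conj_ofReal]
          rw [hTeval t]
          push_cast
          rw [key]
          ring
      · -- nonreal root
        have hα' : (R.map (algebraMap ℝ ℂ)).IsRoot (conj α) := by
          have h1 : Polynomial.aeval (conj α) R = conj (Polynomial.aeval α R) :=
            Polynomial.aeval_conj R α
          have h2 : Polynomial.aeval α R = 0 := by
            rw [Polynomial.aeval_def, ← Polynomial.eval_map]; exact hα
          rw [Polynomial.IsRoot, Polynomial.eval_map, ← Polynomial.aeval_def, h1, h2, map_zero]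
        have hne : α ≠ conj α := by
          intro h
          have h2 := congrArg Complex.im h
          simp only [Complex.conj_im] at h2
          exact him (by linarith)
        set q : ℝ[X] := X ^ 2 - Polynomial.C (2 * α.re) * X
            + Polynomial.C (α.re ^ 2 + α.im ^ 2) with hq
        have hqmap : q.map (algebraMap ℝ ℂ)
            = (X - Polynomial.C α) * (X - Polynomial.C (conj α)) := by
          have h1 : ((2 * α.re : ℝ) : ℂ) = α + conj α := by
            rw [Complex.add_conj]
          have h2 : ((α.re ^ 2 + α.im ^ 2 : ℝ) : ℂ) = α * conj α := by
            rw [Complex.mul_conj, Complex.normSq_apply]; push_cast; ring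
          rw [hq]
          simp only [Polynomial.map_add, Polynomial.map_sub, Polynomial.map_pow,
            Polynomial.map_mul, Polynomial.map_X, Polynomial.map_C]
          rw [show (algebraMap ℝ ℂ) (2 * α.re) = α + conj α from h1,
            show (algebraMap ℝ ℂ) (α.re ^ 2 + α.im ^ 2) = α * conj α from h2]
          simp only [Polynomial.C_add, Polynomial.C_mul]
          ring
        have hdvd : q ∣ R := by
          rw [← Polynomial.map_dvd_map' (algebraMap ℝ ℂ), hqmap]
          have c1 : (X - Polynomial.C α) ∣ R.map (algebraMap ℝ ℂ) :=
            Polynomial.dvd_iff_isRoot.2 hα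
          have c2 : (X - Polynomial.C (conj α)) ∣ R.map (algebraMap ℝ ℂ) :=
            Polynomial.dvd_iff_isRoot.2 hα'
          exact (Polynomial.isCoprime_X_sub_C_of_isUnit_sub
            ((sub_ne_zero.2 hne).isUnit)).mul_dvd c1 c2
        obtain ⟨T, hT⟩ := hdvd
        have hqeval : ∀ t : ℝ, q.eval t = (t - α.re) ^ 2 + α.im ^ 2 := by
          intro t; rw [hq]; simp; ring
        have hqpos : ∀ t : ℝ, 0 < q.eval t := by
          intro t; rw [hqeval]; positivity
        have hTeval : ∀ t : ℝ, R.eval t = q.eval t * T.eval t := by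
          intro t; rw [hT]; simp
        have hT0 : T ≠ 0 := fun h => hR0 (by rw [hT, h, mul_zero])
        have hq0 : q ≠ 0 := fun h => by simpa [h] using (hqpos 0)
        have hqdeg : q.natDegree = 2 := by
          have h1 : (q.map (algebraMap ℝ ℂ)).natDegree = 2 := by
            rw [hqmap, Polynomial.natDegree_mul (X_sub_C_ne_zero α) (X_sub_C_ne_zero (conj α))]
            simp [Polynomial.natDegree_X_sub_C]
          rwa [Polynomial.natDegree_map_eq_of_injective (algebraMap ℝ ℂ).injective] at h1
        have hTdeg : T.natDegree = N - 2 ∧ 2 ≤ N := by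
          have := Polynomial.natDegree_mul hq0 hT0
          rw [← hT, hdeg, hqdeg] at this
          omega
        have hTnn : ∀ t : ℝ, 0 ≤ T.eval t := by
          intro t
          have h1 := hnn t
          rw [hTeval t] at h1
          nlinarith [hqpos t]
        obtain ⟨A₁, hA₁deg, hA₁⟩ := ih (N - 2) (by omega) T hTdeg.1 hTnn
        refine ⟨(X - Polynomial.C α) * A₁, ?_, fun t => ?_⟩
        · have := Polynomial.natDegree_mul_le (p := X - Polynomial.C α) (q := A₁)
          have h3 : (X - Polynomial.C α).natDegree = 1 := Polynomial.natDegree_X_sub_C α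
          omega
        · have key := hA₁ t
          have hmc : ((t : ℂ) - α) * ((t : ℂ) - conj α) = ((q.eval t : ℝ) : ℂ) := by
            have hmc1 := Complex.mul_conj ((t : ℂ) - α)
            rw [map_sub, Complex.conj_ofReal] at hmc1
            rw [hmc1, hqeval t]
            simp [Complex.normSq_apply]
            ring
          simp only [Polynomial.eval_mul, Polynomial.eval_sub, Polynomial.eval_X,
            Polynomial.eval_C, map_mul, map_sub, Complex.conj_ofReal]
          rw [hTeval t]
          push_cast
          push_cast at hmc ⊢
          rw [key, ← hmc]
          ring

/-- **Fejér–Riesz lemma.** If a Laurent polynomial `f` in one complex variable is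
real and nonnegative on the unit circle, then `f(z) = |p(z)|²` there for some
polynomial `p` with complex coefficients. -/
theorem fejer_riesz (f : ℂ → ℂ)
    (hLaurent : ∃ (s : Finset ℤ) (c : ℤ → ℂ), ∀ z : ℂ, z ≠ 0 →
      f z = ∑ k ∈ s, c k * z ^ k)
    (hnn : ∀ z : ℂ, ‖z‖ = 1 → (f z).im = 0 ∧ 0 ≤ (f z).re) :
    ∃ p : Polynomial ℂ, ∀ z : ℂ, ‖z‖ = 1 →
      f z = ((‖p.eval z‖ : ℝ) : ℂ) ^ 2 := by
  obtain ⟨s, c, hc⟩ := hLaurent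
  set n : ℕ := s.sup Int.natAbs with hn
  have hks : ∀ k ∈ s, k.natAbs ≤ n := fun k hk => Finset.le_sup hk
  set Q : ℂ[X] := ∑ k ∈ s, Polynomial.C (c k) * (1 + Polynomial.C I * X) ^ ((n:ℤ)+k).toNat
      * (1 - Polynomial.C I * X) ^ ((n:ℤ)-k).toNat with hQ
  have hu : ∀ t : ℝ, (1 + I*(t:ℂ)) ≠ 0 := by
    intro t h
    have := congrArg Complex.re h
    simp at this
  have hv : ∀ t : ℝ, (1 - I*(t:ℂ)) ≠ 0 := by
    intro t h
    have := congrArg Complex.re h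
    simp at this
  have huv : ∀ t : ℝ, (1 + I*(t:ℂ)) * (1 - I*t) = ((1+t^2 : ℝ):ℂ) := by
    intro t
    push_cast
    linear_combination (-(t:ℂ)^2) * Complex.I_sq
  have habs : ∀ t : ℝ, ‖(1 + I*(t:ℂ))/(1 - I*t)‖ = 1 := by
    intro t
    rw [norm_div]
    rw [show ‖1 + I*(t:ℂ)‖ = ‖1 - I*(t:ℂ)‖ by
      simp [Complex.norm_def, Complex.normSq_apply]]
    exact div_self (fun h => hv t (by simpa using (norm_eq_zero.1 h)))
  have claim1 : ∀ t : ℝ, Q.eval (t:ℂ) = ((1+t^2:ℝ):ℂ)^n * f ((1 + I*t)/(1 - I*t)) := by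
    intro t
    rw [hc _ (div_ne_zero (hu t) (hv t)), Finset.mul_sum, hQ, Polynomial.eval_finset_sum]
    refine Finset.sum_congr rfl fun k hk => ?_
    have hk1 : (k.natAbs : ℤ) ≤ (n : ℤ) := by exact_mod_cast hks k hk
    simp only [Polynomial.eval_mul, Polynomial.eval_pow, Polynomial.eval_add,
      Polynomial.eval_sub, Polynomial.eval_one, Polynomial.eval_C, Polynomial.eval_X]
    have e : (1 + I*(t:ℂ)) ^ (((n:ℤ)+k).toNat) * (1 - I*(t:ℂ)) ^ (((n:ℤ)-k).toNat)
        = ((1+t^2:ℝ):ℂ)^n * ((1 + I*(t:ℂ))/(1 - I*(t:ℂ)))^k := by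
      rw [← huv t]
      rw [← zpow_natCast (1 + I*(t:ℂ)) (((n:ℤ)+k).toNat),
        ← zpow_natCast (1 - I*(t:ℂ)) (((n:ℤ)-k).toNat),
        ← zpow_natCast ((1 + I*(t:ℂ)) * (1 - I*(t:ℂ))) n,
        Int.toNat_of_nonneg (by omega : (0:ℤ) ≤ (n:ℤ)+k),
        Int.toNat_of_nonneg (by omega : (0:ℤ) ≤ (n:ℤ)-k),
        zpow_add₀ (hu t), zpow_sub₀ (hv t), mul_zpow, div_zpow]
      field_simp
    rw [mul_assoc, e]
    ring
  -- claim 2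
  have claim2 : ∀ t : ℝ, (Q.eval (t:ℂ)).im = 0 ∧ 0 ≤ (Q.eval (t:ℂ)).re := by
    intro t
    have h := hnn _ (habs t)
    rw [claim1 t, show ((1+t^2:ℝ):ℂ)^n = (((1+t^2)^n : ℝ):ℂ) by push_cast; ring]
    constructor
    · simp only [Complex.mul_im, Complex.ofReal_im, h.1, mul_zero, zero_mul, add_zero]
    · rw [Complex.mul_re]
      simp only [Complex.ofReal_re, Complex.ofReal_im, zero_mul, sub_zero]
      exact mul_nonneg (by positivity) h.2
  have hQdeg : Q.natDegree ≤ 2*n := by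
    rw [hQ]
    apply Polynomial.natDegree_sum_le_of_forall_le
    intro k hk
    have hk1 : (k.natAbs : ℤ) ≤ (n : ℤ) := by exact_mod_cast hks k hk
    have h1 : (((n:ℤ)+k).toNat) + (((n:ℤ)-k).toNat) = 2*n := by omega
    have hb1 : (1 + Polynomial.C I * X : ℂ[X]).natDegree ≤ 1 := by compute_degree
    have hb2 : (1 - Polynomial.C I * X : ℂ[X]).natDegree ≤ 1 := by compute_degree
    have e2 := Polynomial.natDegree_pow_le_of_le (((n:ℤ)+k).toNat) hb1
    have e3 := Polynomial.natDegree_pow_le_of_le (((n:ℤ)-k).toNat) hb2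
    have e4 := Polynomial.natDegree_mul_le
      (p := Polynomial.C (c k) * (1 + Polynomial.C I * X) ^ ((n:ℤ)+k).toNat)
      (q := (1 - Polynomial.C I * X) ^ ((n:ℤ)-k).toNat)
    have e5 := Polynomial.natDegree_mul_le (p := Polynomial.C (c k))
      (q := (1 + Polynomial.C I * X) ^ ((n:ℤ)+k).toNat)
    simp only [Polynomial.natDegree_C, zero_add] at e5
    omega
  -- lift to a real polynomial
  obtain ⟨R, hR⟩ := real_lift Q (fun t => (claim2 t).1)
  have hReval : ∀ t : ℝ, ((R.eval t : ℝ) : ℂ) = Q.eval (t:ℂ) := by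
    intro t
    rw [← hR, Polynomial.eval_map, show ((t:ℝ):ℂ) = algebraMap ℝ ℂ t from rfl,
      Polynomial.eval₂_at_apply]
    rfl
  have hRnn : ∀ t : ℝ, 0 ≤ R.eval t := by
    intro t
    have h := (claim2 t).2
    rw [← hReval t] at h
    simpa using h
  obtain ⟨A, hAdeg, hAeval⟩ := sos_aux R.natDegree R rfl hRnn
  have hAn : A.natDegree ≤ n := by
    have h2 : R.natDegree = Q.natDegree := by
      rw [← hR, Polynomial.natDegree_map_eq_of_injective (algebraMap ℝ ℂ).injective]
    omega
  set p : ℂ[X] := Polynomial.C ((2:ℂ)^n)⁻¹ * ∑ j ∈ Finset.range (n+1),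
      Polynomial.C (A.coeff j * (-I)^j) * (X - 1)^j * (X + 1)^(n-j) with hp
  -- the key identity away from -1
  have key : ∀ z : ℂ, ‖z‖ = 1 → z ≠ -1 →
      f z = p.eval z * conj (p.eval z) := by
    intro z habs1 hzne
    have hz0 : z ≠ 0 := by intro h; rw [h] at habs1; simp at habs1
    have hz1 : z + 1 ≠ 0 := fun h => hzne (by linear_combination h)
    have hnsq : Complex.normSq z = 1 := by
      have : ‖z‖ ^ 2 = 1 := by rw [habs1]; norm_num
      rw [← this, Complex.sq_norm]
    have hzc : z * conj z = 1 := by rw [Complex.mul_conj, hnsq]; norm_num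
    have hzinv : conj z = z⁻¹ := by
      field_simp
      linear_combination hzc
    set tc : ℂ := -I*(z-1)/(z+1) with htcdef
    have hz2 : z⁻¹ + 1 ≠ 0 := by
      intro h
      apply hz1
      have : z * (z⁻¹ + 1) = 0 := by rw [h, mul_zero]
      rw [mul_add, mul_one, mul_inv_cancel₀ hz0] at this
      linear_combination this
    have hz1' : (1:ℂ) + z ≠ 0 := by rwa [add_comm]
    have htc : conj tc = tc := by
      rw [htcdef, map_div₀, map_mul, map_neg, Complex.conj_I, map_sub, map_add, map_one,
        hzinv]
      field_simp [hz1']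
      ring
    set tr : ℝ := tc.re with htrdef
    have htcr : (tr : ℂ) = tc := Complex.conj_eq_iff_re.1 htc
    have hII : I * -I = 1 := by
      rw [mul_neg, Complex.I_mul_I, neg_neg]
    have hIt : I * tc = (z-1)/(z+1) := by
      rw [htcdef, show I * (-I*(z-1)/(z+1)) = (I * -I) * ((z-1)/(z+1)) from by ring, hII,
        one_mul]
    have hut : 1 + I*tc = 2*z/(z+1) := by
      rw [hIt]
      field_simp [hz1]
      ring
    have hvt : 1 - I*tc = 2/(z+1) := by
      rw [hIt]
      field_simp [hz1]
      ring
    have hz2' : (1 + I*tc)/(1 - I*tc) = z := by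
      rw [hut, hvt]
      field_simp
    have hfz : ((1+tr^2:ℝ):ℂ)^n * f z = Q.eval tc := by
      have h := claim1 tr
      rw [htcr, hz2'] at h
      exact h.symm
    have hQA : Q.eval tc = A.eval tc * conj (A.eval tc) := by
      rw [← htcr, ← hReval tr]
      exact hAeval tr
    have hs0 : ((1+tr^2:ℝ):ℂ) ≠ 0 := by
      rw [Complex.ofReal_ne_zero]
      positivity
    have hP : (2:ℂ)^n * p.eval z = (z+1)^n * A.eval tc := by
      have hj : ∀ j ∈ Finset.range (n+1),
          A.coeff j * tc^j * (z+1)^n = A.coeff j * (-I)^j * (z-1)^j * (z+1)^(n-j) := by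
        intro j hjm
        have hjn : j ≤ n := Nat.lt_succ_iff.1 (Finset.mem_range.1 hjm)
        have htp : tc^j = (-I)^j * (z-1)^j / (z+1)^j := by
          rw [htcdef, div_pow, mul_pow]
        rw [htp, show (z+1)^n = (z+1)^j * (z+1)^(n-j) by rw [← pow_add]; congr 1; omega]
        field_simp
      calc (2:ℂ)^n * p.eval z
          = ∑ j ∈ Finset.range (n+1), A.coeff j * (-I)^j * (z-1)^j * (z+1)^(n-j) := by
            rw [hp]
            simp only [Polynomial.eval_mul, Polynomial.eval_C, Polynomial.eval_finset_sum,
              Polynomial.eval_pow, Polynomial.eval_sub, Polynomial.eval_add, Polynomial.eval_X,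
              Polynomial.eval_one]
            rw [← mul_assoc, mul_inv_cancel₀ (pow_ne_zero n two_ne_zero), one_mul]
        _ = ∑ j ∈ Finset.range (n+1), A.coeff j * tc^j * (z+1)^n :=
            (Finset.sum_congr rfl hj).symm
        _ = (∑ j ∈ Finset.range (n+1), A.coeff j * tc^j) * (z+1)^n := by
            rw [Finset.sum_mul]
        _ = A.eval tc * (z+1)^n := by
            rw [← Polynomial.eval_eq_sum_range' (lt_of_le_of_lt hAn (Nat.lt_succ_self n))]
        _ = (z+1)^n * A.eval tc := mul_comm _ _
    have hPc : (2:ℂ)^n * conj (p.eval z) = (conj (z+1))^n * conj (A.eval tc) := by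
      have h := congrArg conj hP
      simp only [map_mul, map_pow, map_ofNat] at h
      exact h
    have hscalar : ((1+tr^2:ℝ):ℂ) * ((z+1) * conj (z+1)) = 4 := by
      have htc2 : tc^2 * (z+1)^2 = -((z-1)^2) := by
        rw [htcdef, div_pow, div_mul_cancel₀ _ (pow_ne_zero 2 hz1)]
        linear_combination (z-1)^2 * Complex.I_sq
      have h1 : ((1+tr^2:ℝ):ℂ) * (z+1)^2 = 4*z := by
        rw [show ((1+tr^2:ℝ):ℂ) = 1 + tc^2 by push_cast; rw [htcr]]
        linear_combination htc2
      have h2 : z * conj (z+1) = z + 1 := by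
        rw [map_add, map_one, hzinv]
        field_simp
        ring
      have h3 : (((1+tr^2:ℝ):ℂ) * ((z+1) * conj (z+1))) * (z+1) = 4 * (z+1) := by
        linear_combination conj (z+1) * h1 + 4 * h2
      exact mul_right_cancel₀ hz1 h3
    have h4 : (4:ℂ)^n * (p.eval z * conj (p.eval z))
        = ((z+1) * conj (z+1))^n * Q.eval tc := by
      rw [show ((4:ℂ))^n = (2:ℂ)^n * (2:ℂ)^n by rw [← mul_pow]; norm_num]
      calc (2:ℂ)^n * (2:ℂ)^n * (p.eval z * conj (p.eval z))
          = ((2:ℂ)^n * p.eval z) * ((2:ℂ)^n * conj (p.eval z)) := by ring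
        _ = ((z+1)^n * A.eval tc) * ((conj (z+1))^n * conj (A.eval tc)) := by rw [hP, hPc]
        _ = ((z+1) * conj (z+1))^n * (A.eval tc * conj (A.eval tc)) := by rw [mul_pow]; ring
        _ = ((z+1) * conj (z+1))^n * Q.eval tc := by rw [hQA]
    have h5 : ((1+tr^2:ℝ):ℂ)^n * ((z+1) * conj (z+1))^n = 4^n := by
      rw [← mul_pow, hscalar]
    have h6 : ((1+tr^2:ℝ):ℂ)^n * ((4:ℂ)^n * f z)
        = ((1+tr^2:ℝ):ℂ)^n * ((4:ℂ)^n * (p.eval z * conj (p.eval z))) := by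
      calc ((1+tr^2:ℝ):ℂ)^n * ((4:ℂ)^n * f z)
          = (4:ℂ)^n * (((1+tr^2:ℝ):ℂ)^n * f z) := by ring
        _ = (4:ℂ)^n * Q.eval tc := by rw [hfz]
        _ = ((1+tr^2:ℝ):ℂ)^n * ((z+1) * conj (z+1))^n * Q.eval tc := by rw [h5]
        _ = ((1+tr^2:ℝ):ℂ)^n * (((z+1) * conj (z+1))^n * Q.eval tc) := by ring
        _ = ((1+tr^2:ℝ):ℂ)^n * ((4:ℂ)^n * (p.eval z * conj (p.eval z))) := by rw [← h4]
    have h7 := mul_left_cancel₀ (pow_ne_zero n hs0) h6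
    exact mul_left_cancel₀ (pow_ne_zero n (by norm_num : (4:ℂ) ≠ 0)) h7
  -- extend to z = -1 by continuity
  have key2 : ∀ z : ℂ, ‖z‖ = 1 → f z = p.eval z * conj (p.eval z) := by
    intro z hz
    have hz0' : z ≠ 0 := by intro h; rw [h] at hz; simp at hz
    by_cases hzne : z = -1
    · subst hzne
      set g : ℂ → ℂ := fun w => ∑ k ∈ s, c k * w ^ k with hg
      have hfg : ∀ w : ℂ, ‖w‖ = 1 → f w = g w := fun w hw =>
        hc w (by intro h; rw [h] at hw; simp at hw)
      set h : ℂ → ℂ := fun w => p.eval w * conj (p.eval w) with hh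
      have hcg : ContinuousAt g (-1) := by
        apply tendsto_finset_sum
        intro k _
        exact continuousAt_const.mul (continuousAt_zpow₀ (-1) k (Or.inl (by norm_num)))
      have hch : ContinuousAt h (-1) :=
        ((Polynomial.continuous p).mul
          (Complex.continuous_conj.comp (Polynomial.continuous p))).continuousAt
      set u : ℕ → ℂ := fun m => Complex.exp (((Real.pi - 1/(m+1) : ℝ) : ℂ) * I) with hudef
      have hu1 : ∀ m, ‖u m‖ = 1 := fun m => Complex.norm_exp_ofReal_mul_I _
      have hu2 : ∀ m, u m ≠ -1 := by
        intro m hm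
        have hm1 : (0:ℝ) < 1/(m+1) := by positivity
        have hm2 : (1:ℝ)/(m+1) ≤ 1 := by
          rw [div_le_one (by positivity)]
          exact le_add_of_nonneg_left (Nat.cast_nonneg m)
        have hm' : Complex.exp (((Real.pi - 1/(m+1) : ℝ) : ℂ) * I) = -1 := hm
        have h1 : Complex.exp ((((Real.pi - 1/(m+1) : ℝ)):ℂ) * I - (Real.pi:ℂ) * I) = 1 := by
          rw [Complex.exp_sub, hm', Complex.exp_pi_mul_I]
          norm_num
        rw [Complex.exp_eq_one_iff] at h1
        obtain ⟨j, hj⟩ := h1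
        have h2 : (((Real.pi - 1/(m+1) : ℝ)):ℂ) * I - (Real.pi:ℂ) * I
            = ((-(1/(m+1)) : ℝ):ℂ) * I := by push_cast; ring
        rw [h2] at hj
        have h5 : (((j:ℝ)*(2*Real.pi) : ℝ):ℂ) * I = ((-(1/(m+1)) : ℝ):ℂ) * I := by
          rw [hj]; push_cast; ring
        have h6 := mul_right_cancel₀ Complex.I_ne_zero h5
        have h3 : (-(1/(m+1)) : ℝ) = j * (2*Real.pi) := by exact_mod_cast h6.symm
        rcases lt_trichotomy (j:ℝ) 0 with hjc|hjc|hjc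
        · have hjz : j < 0 := by exact_mod_cast hjc
          have hj1 : (j:ℝ) ≤ -1 := by exact_mod_cast (by omega : j ≤ -1)
          nlinarith [Real.pi_gt_three]
        · rw [hjc, zero_mul] at h3; linarith
        · have hjz : 0 < j := by exact_mod_cast hjc
          have hj1 : (1:ℝ) ≤ (j:ℝ) := by exact_mod_cast (by omega : 1 ≤ j)
          nlinarith [Real.pi_gt_three]
      have hu3 : Filter.Tendsto u Filter.atTop (nhds (-1)) := by
        have hθ : Filter.Tendsto (fun m : ℕ => (Real.pi - 1/(m+1) : ℝ)) Filter.atTop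
            (nhds Real.pi) := by
          have h5 := tendsto_one_div_add_atTop_nhds_zero_nat (𝕜 := ℝ)
          have h6 := h5.const_sub Real.pi
          simpa using h6
        have h7 : Filter.Tendsto (fun m : ℕ => ((Real.pi - 1/(m+1) : ℝ):ℂ) * I) Filter.atTop
            (nhds ((Real.pi:ℂ) * I)) :=
          ((Complex.continuous_ofReal.tendsto _).comp hθ).mul_const I
        have h8 := (Complex.continuous_exp.tendsto _).comp h7
        rw [Complex.exp_pi_mul_I] at h8
        exact h8
      have hgh : g (-1) = h (-1) := by
        have t1 : Filter.Tendsto (g ∘ u) Filter.atTop (nhds (g (-1))) := hcg.tendsto.comp hu3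
        have t2 : Filter.Tendsto (g ∘ u) Filter.atTop (nhds (h (-1))) := by
          have heq : g ∘ u = h ∘ u := funext fun m => by
            have k1 := key (u m) (hu1 m) (hu2 m)
            have k2 := hfg (u m) (hu1 m)
            simp only [Function.comp_apply, hh]
            rw [← k2, k1]
          rw [heq]
          exact hch.tendsto.comp hu3
        exact tendsto_nhds_unique t1 t2
      rw [hfg _ hz]
      exact hgh
    · exact key z hz hzne
  refine ⟨p, fun z hz => ?_⟩
  rw [key2 z hz, Complex.mul_conj, ← Complex.sq_norm]
  push_cast
  ring
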